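/- Let U ⊆ ℝ^(n+2) be open, (ξ, N) a null frame on U, and Z : U → ℝ^(n+2) differentiable and parallel (fderiv ℝ Z p = 0 for all p ∈ U). Assume that at every p ∈ U the operators A*_ξ(p) and A_N(p) are symmetric on screen vectors, and that for every p and every screen vector v at p the derivative of q ↦ η(Z q, ξ q) * η(Z q, N q) at p in the direction v vanishes (constant angle). Then A_{Z⊥}(p)(Z*(p)) = 0 for every p ∈ U. (Flat-Minkowski-ambient form of the paper's corollary that for a constant angle null hypersurface with respect to a parallel field the projected field is a principal direction with eigenvalue zero.) -/

import Mathlib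

open scoped BigOperators

noncomputable section

/-- Euclidean space `ℝ^m`. -/
abbrev E (m : ℕ) : Type := EuclideanSpace ℝ (Fin m)

/-- The Minkowski bilinear form `η(x,y) = -(x 0)(y 0) + ∑_{i≥1} (x i)(y i)` on `ℝ^(n+2)`. -/
def eta {n : ℕ} (x y : E (n + 2)) : ℝ :=
  (∑ i, x i * y i) - 2 * (x 0 * y 0)

/-- Screen projection `P_p(w) = w - η(w,N)ξ - η(w,ξ)N` determined by the null frame at a point. -/
def sproj {n : ℕ} (xi N w : E (n + 2)) : E (n + 2) :=
  w - eta w N • xi - eta w xi • N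

/-- Screen shape operator `A*_ξ(p)(v) = -P_p(D_v ξ (p))`. -/
def Astar {n : ℕ} (xi N : E (n + 2) → E (n + 2)) (p v : E (n + 2)) : E (n + 2) :=
  -sproj (xi p) (N p) (fderiv ℝ xi p v)

/-- Shape operator `A_N(p)(v) = -P_p(D_v N (p))`. -/
def AN {n : ℕ} (xi N : E (n + 2) → E (n + 2)) (p v : E (n + 2)) : E (n + 2) :=
  -sproj (xi p) (N p) (fderiv ℝ N p v)

/-- Transversal one-form `τ_p(v) = η(D_v N(p), ξ p)`. -/
def tau {n : ℕ} (xi N : E (n + 2) → E (n + 2)) (p v : E (n + 2)) : ℝ :=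
  eta (fderiv ℝ N p v) (xi p)

/-- Screen part `Z*(p) = P_p(Z p)` of a vector field. -/
def Zstar {n : ℕ} (xi N Z : E (n + 2) → E (n + 2)) (p : E (n + 2)) : E (n + 2) :=
  sproj (xi p) (N p) (Z p)

/-- `A_{Z⊥}(p)(v) = η(Z p, N p) • A*_ξ(p)(v) + η(Z p, ξ p) • A_N(p)(v)`. -/
def AZperp {n : ℕ} (xi N Z : E (n + 2) → E (n + 2)) (p v : E (n + 2)) : E (n + 2) :=
  eta (Z p) (N p) • Astar xi N p v + eta (Z p) (xi p) • AN xi N p v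

namespace EtaAux

variable {n : ℕ}

lemma eta_comm (x y : E (n + 2)) : eta x y = eta y x := by
  simp [eta, mul_comm]

lemma eta_add_left (x x' y : E (n + 2)) : eta (x + x') y = eta x y + eta x' y := by
  simp [eta, PiLp.add_apply, add_mul, Finset.sum_add_distrib]; ring

lemma eta_smul_left (r : ℝ) (x y : E (n + 2)) : eta (r • x) y = r * eta x y := by
  simp [eta, PiLp.smul_apply, smul_eq_mul, mul_assoc, ← Finset.mul_sum]; ring

lemma eta_neg_left (x y : E (n + 2)) : eta (-x) y = -eta x y := by
  simp [eta, PiLp.neg_apply, Finset.sum_neg_distrib]; ring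

lemma eta_sub_left (x x' y : E (n + 2)) : eta (x - x') y = eta x y - eta x' y := by
  rw [sub_eq_add_neg, eta_add_left, eta_neg_left]; ring

lemma eta_zero_left (y : E (n + 2)) : eta 0 y = 0 := by
  simp [eta]

lemma eta_add_right (x y y' : E (n + 2)) : eta x (y + y') = eta x y + eta x y' := by
  rw [eta_comm, eta_add_left, eta_comm y x, eta_comm y' x]

lemma eta_smul_right (r : ℝ) (x y : E (n + 2)) : eta x (r • y) = r * eta x y := by
  rw [eta_comm, eta_smul_left, eta_comm]

lemma eta_sub_right (x y y' : E (n + 2)) : eta x (y - y') = eta x y - eta x y' := by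
  rw [eta_comm, eta_sub_left, eta_comm y x, eta_comm y' x]

lemma eta_zero_right (x : E (n + 2)) : eta x 0 = 0 := by
  rw [eta_comm, eta_zero_left]

lemma eta_neg_right (x y : E (n + 2)) : eta x (-y) = -eta x y := by
  rw [eta_comm, eta_neg_left, eta_comm]

/-- `eta` as a linear map in the second argument. -/
def etaL1 (x : E (n + 2)) : E (n + 2) →ₗ[ℝ] ℝ where
  toFun y := eta x y
  map_add' y y' := eta_add_right x y y'
  map_smul' r y := by simp [eta_smul_right]

/-- `eta` as a continuous bilinear map. -/
def etaCLM : E (n + 2) →L[ℝ] E (n + 2) →L[ℝ] ℝ :=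
  LinearMap.toContinuousLinearMap
  { toFun := fun x => LinearMap.toContinuousLinearMap (etaL1 x)
    map_add' := fun x x' => by
      ext y
      simp [etaL1, eta_add_left]
    map_smul' := fun r x => by
      ext y
      simp [etaL1, eta_smul_left] }

@[simp] lemma etaCLM_apply (x y : E (n + 2)) : etaCLM x y = eta x y := rfl

lemma isBBM : IsBoundedBilinearMap ℝ (fun xy : E (n + 2) × E (n + 2) => eta xy.1 xy.2) :=
  (etaCLM (n := n)).isBoundedBilinearMap

lemma hasFDerivAt_eta {f g : E (n + 2) → E (n + 2)} {p : E (n + 2)}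
    (hf : DifferentiableAt ℝ f p) (hg : DifferentiableAt ℝ g p) :
    HasFDerivAt (fun q => eta (f q) (g q))
      (((isBBM (n := n)).deriv (f p, g p)).comp ((fderiv ℝ f p).prod (fderiv ℝ g p))) p := by
  exact ((isBBM (n := n)).hasFDerivAt (f p, g p)).comp (f := fun q => (f q, g q)) p
    (HasFDerivAt.prodMk (hf.hasFDerivAt) (hg.hasFDerivAt))

lemma differentiableAt_eta {f g : E (n + 2) → E (n + 2)} {p : E (n + 2)}
    (hf : DifferentiableAt ℝ f p) (hg : DifferentiableAt ℝ g p) :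
    DifferentiableAt ℝ (fun q => eta (f q) (g q)) p :=
  (hasFDerivAt_eta hf hg).differentiableAt

lemma fderiv_eta {f g : E (n + 2) → E (n + 2)} {p : E (n + 2)}
    (hf : DifferentiableAt ℝ f p) (hg : DifferentiableAt ℝ g p) (v : E (n + 2)) :
    fderiv ℝ (fun q => eta (f q) (g q)) p v =
      eta (fderiv ℝ f p v) (g p) + eta (f p) (fderiv ℝ g p v) := by
  rw [(hasFDerivAt_eta hf hg).fderiv]
  simp [IsBoundedBilinearMap.deriv_apply, add_comm]

/-- Differentiating a constant `eta`-pairing. -/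
lemma fderiv_eta_const {U : Set (E (n + 2))} (hU : IsOpen U) {f g : E (n + 2) → E (n + 2)}
    {p : E (n + 2)} (hp : p ∈ U)
    (hf : DifferentiableAt ℝ f p) (hg : DifferentiableAt ℝ g p) (c : ℝ)
    (hconst : ∀ q ∈ U, eta (f q) (g q) = c) (v : E (n + 2)) :
    eta (fderiv ℝ f p v) (g p) + eta (f p) (fderiv ℝ g p v) = 0 := by
  have hev : (fun q => eta (f q) (g q)) =ᶠ[nhds p] (fun _ => c) :=
    Filter.eventuallyEq_of_mem (hU.mem_nhds hp) hconst
  have h0 : fderiv ℝ (fun q => eta (f q) (g q)) p = 0 := by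
    rw [hev.fderiv_eq]; simp
  have h := fderiv_eta hf hg v
  rw [h0] at h
  simpa using h.symm

lemma eta_sproj_xi (xi Np : E (n + 2)) (hξξ : eta xi xi = 0) (hNξ : eta Np xi = 1)
    (w : E (n + 2)) : eta (sproj xi Np w) xi = 0 := by
  unfold sproj
  rw [eta_sub_left, eta_sub_left, eta_smul_left, eta_smul_left, hξξ, hNξ]
  ring

lemma eta_sproj_N (xi Np : E (n + 2)) (hNN : eta Np Np = 0) (hξN : eta xi Np = 1)
    (w : E (n + 2)) : eta (sproj xi Np w) Np = 0 := by
  unfold sproj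
  rw [eta_sub_left, eta_sub_left, eta_smul_left, eta_smul_left, hNN, hξN]
  ring

lemma eta_sproj_screen (xi Np z X : E (n + 2)) (hXξ : eta X xi = 0) (hXN : eta X Np = 0) :
    eta (sproj xi Np z) X = eta z X := by
  unfold sproj
  rw [eta_sub_left, eta_sub_left, eta_smul_left, eta_smul_left,
    eta_comm xi X, eta_comm Np X, hXξ, hXN]
  ring

/-- If `c` is timelike, `x` is `eta`-orthogonal to `c` and `eta x x ≤ 0`, then `x = 0`. -/
lemma eta_timelike_orthogonal_eq_zero (x c : E (n + 2))
    (hc : eta c c < 0) (hxc : eta x c = 0) (hxx : eta x x ≤ 0) : x = 0 := by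
  have hsplit : ∀ z w : E (n + 2), eta z w
      = (∑ i : Fin (n + 1), z i.succ * w i.succ) - z 0 * w 0 := by
    intro z w
    rw [eta, Fin.sum_univ_succ]
    ring
  set A := ∑ i : Fin (n + 1), x i.succ * x i.succ with hA
  set B := ∑ i : Fin (n + 1), c i.succ * c i.succ with hB
  set S := ∑ i : Fin (n + 1), x i.succ * c i.succ with hS
  have hA0 : 0 ≤ A := Finset.sum_nonneg fun i _ => mul_self_nonneg _
  have hB0 : 0 ≤ B := Finset.sum_nonneg fun i _ => mul_self_nonneg _
  have hcs : S ^ 2 ≤ A * B := by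
    have := Finset.sum_mul_sq_le_sq_mul_sq Finset.univ
      (fun i : Fin (n + 1) => x i.succ) (fun i : Fin (n + 1) => c i.succ)
    simpa [hA, hB, hS, sq] using this
  have h1 : B - c 0 * c 0 < 0 := by rw [hsplit] at hc; linarith
  have h2 : S = x 0 * c 0 := by rw [hsplit] at hxc; linarith
  have h3 : A - x 0 * x 0 ≤ 0 := by rw [hsplit] at hxx; linarith
  have hx0 : x 0 = 0 := by
    by_contra h
    have hx2 : 0 < x 0 * x 0 := mul_self_pos.mpr h
    have k1 : (x 0 * c 0) ^ 2 ≤ A * B := by rw [← h2]; exact hcs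
    have k2 : A * B ≤ (x 0 * x 0) * B := mul_le_mul_of_nonneg_right (by linarith) hB0
    have k3 : (x 0 * c 0) ^ 2 = (x 0 * x 0) * (c 0 * c 0) := by ring
    nlinarith [mul_pos hx2 (show (0:ℝ) < c 0 * c 0 - B by linarith)]
  have hA' : A = 0 := le_antisymm (by nlinarith) hA0
  have hzero : ∀ i : Fin (n + 1), x i.succ = 0 := by
    intro i
    have := (Finset.sum_eq_zero_iff_of_nonneg
      (fun j (_ : j ∈ Finset.univ) => mul_self_nonneg (x j.succ))).mp hA' i (Finset.mem_univ i)
    exact mul_self_eq_zero.mp this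
  ext i
  refine Fin.cases ?_ ?_ i
  · exact hx0
  · intro j; exact hzero j

end EtaAux

open EtaAux

/-- For a screen integrable constant angle null hypersurface with respect to
a parallel field, the projected field is a principal direction of `A_{Z⊥}` with eigenvalue
zero (flat Minkowski ambient form). -/
theorem constant_angle_parallel_eigenvalue_zero {n : ℕ}
    (U : Set (E (n + 2))) (hU : IsOpen U)
    (ξ N Z : E (n + 2) → E (n + 2))
    (hξd : ∀ p ∈ U, DifferentiableAt ℝ ξ p)
    (hNd : ∀ p ∈ U, DifferentiableAt ℝ N p)
    (hZd : ∀ p ∈ U, DifferentiableAt ℝ Z p)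
    (hξξ : ∀ p ∈ U, eta (ξ p) (ξ p) = 0)
    (hNN : ∀ p ∈ U, eta (N p) (N p) = 0)
    (hξN : ∀ p ∈ U, eta (ξ p) (N p) = 1)
    (hpar : ∀ p ∈ U, fderiv ℝ Z p = 0)
    (hAsym : ∀ p ∈ U, ∀ v w : E (n + 2),
      eta v (ξ p) = 0 → eta v (N p) = 0 → eta w (ξ p) = 0 → eta w (N p) = 0 →
      eta (Astar ξ N p v) w = eta v (Astar ξ N p w))
    (hANsym : ∀ p ∈ U, ∀ v w : E (n + 2),
      eta v (ξ p) = 0 → eta v (N p) = 0 → eta w (ξ p) = 0 → eta w (N p) = 0 →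
      eta (AN ξ N p v) w = eta v (AN ξ N p w))
    (hang : ∀ p ∈ U, ∀ v : E (n + 2), eta v (ξ p) = 0 → eta v (N p) = 0 →
      fderiv ℝ (fun q => eta (Z q) (ξ q) * eta (Z q) (N q)) p v = 0) :
    ∀ p ∈ U, AZperp ξ N Z p (Zstar ξ N Z p) = 0 := by
  intro p hp
  have hξξp := hξξ p hp
  have hNNp := hNN p hp
  have hξNp := hξN p hp
  have hNξp : eta (N p) (ξ p) = 1 := by rw [eta_comm]; exact hξNp
  -- derivative facts
  have hDξξ : ∀ v : E (n + 2), eta (fderiv ℝ ξ p v) (ξ p) = 0 := by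
    intro v
    have h := fderiv_eta_const hU hp (hξd p hp) (hξd p hp) 0 hξξ v
    rw [eta_comm (ξ p)] at h
    linarith
  have hDNN : ∀ v : E (n + 2), eta (fderiv ℝ N p v) (N p) = 0 := by
    intro v
    have h := fderiv_eta_const hU hp (hNd p hp) (hNd p hp) 0 hNN v
    rw [eta_comm (N p)] at h
    linarith
  have hDξN : ∀ v : E (n + 2),
      eta (fderiv ℝ ξ p v) (N p) = -eta (fderiv ℝ N p v) (ξ p) := by
    intro v
    have h := fderiv_eta_const hU hp (hξd p hp) (hNd p hp) 1 hξN v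
    rw [eta_comm (ξ p)] at h
    linarith
  have hZa : ∀ v : E (n + 2),
      fderiv ℝ (fun q => eta (Z q) (ξ q)) p v = eta (Z p) (fderiv ℝ ξ p v) := by
    intro v
    rw [fderiv_eta (hZd p hp) (hξd p hp) v, hpar p hp]
    simp [eta_zero_left]
  have hZb : ∀ v : E (n + 2),
      fderiv ℝ (fun q => eta (Z q) (N q)) p v = eta (Z p) (fderiv ℝ N p v) := by
    intro v
    rw [fderiv_eta (hZd p hp) (hNd p hp) v, hpar p hp]
    simp [eta_zero_left]
  -- screen-ness of the operators and of Zstar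
  have hAstarξ : ∀ v : E (n + 2), eta (Astar ξ N p v) (ξ p) = 0 := by
    intro v
    unfold Astar
    rw [eta_neg_left, eta_sproj_xi _ _ hξξp hNξp, neg_zero]
  have hAstarN : ∀ v : E (n + 2), eta (Astar ξ N p v) (N p) = 0 := by
    intro v
    unfold Astar
    rw [eta_neg_left, eta_sproj_N _ _ hNNp hξNp, neg_zero]
  have hANξ : ∀ v : E (n + 2), eta (AN ξ N p v) (ξ p) = 0 := by
    intro v
    unfold AN
    rw [eta_neg_left, eta_sproj_xi _ _ hξξp hNξp, neg_zero]
  have hANN : ∀ v : E (n + 2), eta (AN ξ N p v) (N p) = 0 := by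
    intro v
    unfold AN
    rw [eta_neg_left, eta_sproj_N _ _ hNNp hξNp, neg_zero]
  have hZsξ : eta (Zstar ξ N Z p) (ξ p) = 0 := by
    unfold Zstar; exact eta_sproj_xi _ _ hξξp hNξp _
  have hZsN : eta (Zstar ξ N Z p) (N p) = 0 := by
    unfold Zstar; exact eta_sproj_N _ _ hNNp hξNp _
  -- the key computation : eta u w = 0 for all screen w
  have hetaw : ∀ w : E (n + 2), eta w (ξ p) = 0 → eta w (N p) = 0 →
      eta (AZperp ξ N Z p (Zstar ξ N Z p)) w = 0 := by
    intro w hwξ hwN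
    have e1 : eta (Zstar ξ N Z p) (Astar ξ N p w)
        = -(fderiv ℝ (fun q => eta (Z q) (ξ q)) p w
            + eta (fderiv ℝ N p w) (ξ p) * eta (Z p) (ξ p)) := by
      have s1 : eta (Zstar ξ N Z p) (Astar ξ N p w) = eta (Z p) (Astar ξ N p w) :=
        eta_sproj_screen (ξ p) (N p) (Z p) (Astar ξ N p w) (hAstarξ w) (hAstarN w)
      rw [s1]
      unfold Astar sproj
      rw [eta_neg_right, eta_sub_right, eta_sub_right, eta_smul_right, eta_smul_right,
        hDξξ w, hDξN w, ← hZa w]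
      ring
    have e2 : eta (Zstar ξ N Z p) (AN ξ N p w)
        = -(fderiv ℝ (fun q => eta (Z q) (N q)) p w
            - eta (fderiv ℝ N p w) (ξ p) * eta (Z p) (N p)) := by
      have s1 : eta (Zstar ξ N Z p) (AN ξ N p w) = eta (Z p) (AN ξ N p w) :=
        eta_sproj_screen (ξ p) (N p) (Z p) (AN ξ N p w) (hANξ w) (hANN w)
      rw [s1]
      unfold AN sproj
      rw [eta_neg_right, eta_sub_right, eta_sub_right, eta_smul_right, eta_smul_right,
        hDNN w, ← hZb w]
      ring
    have hprod := hang p hp w hwξ hwN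
    rw [fderiv_fun_mul (differentiableAt_eta (hZd p hp) (hξd p hp))
        (differentiableAt_eta (hZd p hp) (hNd p hp))] at hprod
    simp only [ContinuousLinearMap.add_apply, ContinuousLinearMap.smul_apply,
      smul_eq_mul] at hprod
    unfold AZperp
    rw [eta_add_left, eta_smul_left, eta_smul_left,
      hAsym p hp (Zstar ξ N Z p) w hZsξ hZsN hwξ hwN,
      hANsym p hp (Zstar ξ N Z p) w hZsξ hZsN hwξ hwN, e1, e2]
    linear_combination -hprod
  -- conclude via positivity of the screen metric
  have huξ : eta (AZperp ξ N Z p (Zstar ξ N Z p)) (ξ p) = 0 := by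
    unfold AZperp
    rw [eta_add_left, eta_smul_left, eta_smul_left, hAstarξ _, hANξ _]
    ring
  have huN : eta (AZperp ξ N Z p (Zstar ξ N Z p)) (N p) = 0 := by
    unfold AZperp
    rw [eta_add_left, eta_smul_left, eta_smul_left, hAstarN _, hANN _]
    ring
  have huu : eta (AZperp ξ N Z p (Zstar ξ N Z p)) (AZperp ξ N Z p (Zstar ξ N Z p)) = 0 :=
    hetaw _ huξ huN
  have hc : eta (AZperp ξ N Z p (Zstar ξ N Z p)) (ξ p - N p) = 0 := by
    rw [eta_sub_right, huξ, huN]; ring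
  have hcc : eta (ξ p - N p) (ξ p - N p) < 0 := by
    rw [eta_sub_left, eta_sub_right, eta_sub_right, hξξp, hξNp, hNξp, hNNp]
    norm_num
  exact eta_timelike_orthogonal_eq_zero _ (ξ p - N p) hcc hc (le_of_eq huu)

end
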